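/- Under the posterior π(κ | x, τ) ∝ κ^{a-1/2}(1-κ)^{-a-1} L((1/τ²)(1/κ-1)) e^{-κx²/2} on (0,1), if L is bounded above by M > 0 on (0,∞), then for any fixed ε ∈ (0,1) and τ > 0, P(κ < ε | x, τ) ≤ (KM/a) ε^a (1-ε)^{-a} e^{x²/2} τ^{2a} (1+o(1)), where the o(1) term is uniform in x and vanishes as τ → 0. -/

import Mathlib

open MeasureTheory Filter Set Topology

open scoped ENNReal


lemma betaIntegrable (a ε : ℝ) (ha : 0 < a) (hε0 : 0 < ε) (hε1 : ε < 1) :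
    IntegrableOn (fun κ : ℝ => κ ^ (a-1) * (1-κ) ^ (-a-1)) (Ioo (0:ℝ) ε) := by
  have hmono : IntegrableOn (fun κ : ℝ => κ ^ (a-1) * (1-ε) ^ (-a-1)) (Ioo (0:ℝ) ε) := by
    apply Integrable.mul_const
    have h := intervalIntegral.intervalIntegrable_rpow' (a := 0) (b := ε)
      (r := a - 1) (by linarith)
    rw [intervalIntegrable_iff_integrableOn_Ioo_of_le hε0.le] at h
    exact h
  apply Integrable.mono hmono
  · apply ContinuousOn.aestronglyMeasurable _ measurableSet_Ioo
    apply ContinuousOn.mul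
    · exact ContinuousOn.rpow_const continuousOn_id (fun κ hκ => Or.inl (ne_of_gt hκ.1))
    · exact ContinuousOn.rpow_const (continuous_const.sub continuous_id).continuousOn
        (fun κ hκ => Or.inl (by intro h; nlinarith [hκ.2, sub_eq_zero.mp h]))
  · rw [ae_restrict_iff' measurableSet_Ioo]
    filter_upwards with κ hκ
    have hκ0 : (0:ℝ) < κ := hκ.1
    have h1κ : (0:ℝ) < 1 - κ := by linarith [hκ.2, hε1]
    have h1ε : (0:ℝ) < 1 - ε := by linarith
    rw [Real.norm_eq_abs, Real.norm_eq_abs, abs_of_nonneg, abs_of_nonneg]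
    · apply mul_le_mul_of_nonneg_left
      · apply Real.rpow_le_rpow_of_nonpos h1ε (by linarith [hκ.2]) (by linarith)
      · positivity
    · positivity
    · positivity

lemma betaIntegral (a ε : ℝ) (ha : 0 < a) (hε0 : 0 < ε) (hε1 : ε < 1) :
    ∫ κ in Ioo (0:ℝ) ε, κ ^ (a-1) * (1-κ) ^ (-a-1) = ε ^ a * (1-ε) ^ (-a) / a := by
  have h1ε : (0:ℝ) < 1 - ε := by linarith
  set F : ℝ → ℝ := fun κ => (κ * (1-κ)⁻¹) ^ a / a with hF
  have hint : IntervalIntegrable (fun κ : ℝ => κ ^ (a-1) * (1-κ) ^ (-a-1)) volume 0 ε := by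
    rw [intervalIntegrable_iff_integrableOn_Ioo_of_le hε0.le]
    exact betaIntegrable a ε ha hε0 hε1
  have hderiv : ∀ κ ∈ Ioo (0:ℝ) ε,
      HasDerivAt F (κ ^ (a-1) * (1-κ) ^ (-a-1)) κ := by
    intro κ hκ
    have hκ0 : (0:ℝ) < κ := hκ.1
    have h1κ : (0:ℝ) < 1 - κ := by linarith [hκ.2]
    have hg : HasDerivAt (fun κ : ℝ => κ * (1-κ)⁻¹) ((1-κ)⁻¹ + κ * ((1-κ)^2)⁻¹) κ := by
      have h1 : HasDerivAt (fun κ : ℝ => (1-κ)⁻¹) (((1-κ)^2)⁻¹) κ := by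
        have := ((hasDerivAt_id κ).const_sub 1).inv (by positivity)
        exact this.congr_deriv (by simp)
      exact ((hasDerivAt_id' κ).mul h1).congr_deriv (by ring)
    have hrp : HasDerivAt (fun y : ℝ => y ^ a) (a * (κ * (1-κ)⁻¹) ^ (a-1)) (κ * (1-κ)⁻¹) :=
      Real.hasDerivAt_rpow_const (Or.inl (by positivity))
    have hda := (hrp.comp κ hg).div_const a
    have hrw : (κ * (1-κ)⁻¹) ^ (a-1) = κ ^ (a-1) * (1-κ) ^ (-(a-1)) := by
      rw [Real.mul_rpow hκ0.le (by positivity), Real.inv_rpow h1κ.le, ← Real.rpow_neg h1κ.le]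
    have h2 : (1-κ)⁻¹ + κ * ((1-κ)^2)⁻¹ = ((1-κ)^2)⁻¹ := by field_simp; ring
    have h3 : ((1-κ)^2)⁻¹ = (1-κ) ^ (-2:ℝ) := by
      rw [← Real.rpow_natCast (1-κ) 2, ← Real.rpow_neg h1κ.le]; norm_num
    have h4 : (1-κ) ^ (-(a-1)) * (1-κ) ^ (-2:ℝ) = (1-κ) ^ (-a-1) := by
      rw [← Real.rpow_add h1κ]; ring_nf
    have heq : a * (κ * (1-κ)⁻¹) ^ (a-1) * ((1-κ)⁻¹ + κ * ((1-κ)^2)⁻¹) / a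
        = κ ^ (a-1) * (1-κ) ^ (-a-1) := by
      rw [h2, hrw, h3]
      calc a * (κ ^ (a-1) * (1-κ) ^ (-(a-1))) * (1-κ) ^ (-2:ℝ) / a
          = κ ^ (a-1) * ((1-κ) ^ (-(a-1)) * (1-κ) ^ (-2:ℝ)) := by
            field_simp
        _ = κ ^ (a-1) * (1-κ) ^ (-a-1) := by rw [h4]
    rw [heq] at hda
    exact hda
  have hcont : ContinuousOn F (Icc 0 ε) := by
    apply ContinuousOn.div_const
    apply ContinuousOn.rpow_const
    · exact (continuousOn_id.mul ((continuous_const.sub continuous_id).continuousOn.inv₀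
        (fun κ hκ => by intro h; nlinarith [hκ.2, (sub_eq_zero.mp (show 1 - κ = 0 from h))])))
    · intro κ hκ; exact Or.inr ha.le
  have key := intervalIntegral.integral_eq_sub_of_hasDeriv_right_of_le hε0.le hcont
    (fun κ hκ => (hderiv κ hκ).hasDerivWithinAt) hint
  rw [intervalIntegral.integral_of_le hε0.le, integral_Ioc_eq_integral_Ioo] at key
  rw [key, hF]
  simp only
  norm_num
  rw [Real.zero_rpow ha.ne', Real.mul_rpow hε0.le (by positivity), Real.inv_rpow h1ε.le,
    ← Real.rpow_neg h1ε.le]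
  ring


lemma coeff_eq (a τ κ : ℝ) (hτ : 0 < τ) (hκ : 0 < κ) (hκ1 : κ < 1) :
    (τ^2*κ^2)⁻¹ * (((1-κ)/(τ^2*κ)) ^ (-a-1) * (κ⁻¹) ^ (-(1/2):ℝ))
      = τ ^ (2*a) * (κ ^ (a-1/2) * (1-κ) ^ (-a-1)) := by
  have h1κ : (0:ℝ) < 1 - κ := by linarith
  have hT : (0:ℝ) < τ^2 := by positivity
  have hA : (κ⁻¹) ^ (-(1/2):ℝ) = κ ^ ((1/2):ℝ) := by
    rw [Real.inv_rpow hκ.le, ← Real.rpow_neg hκ.le]; norm_num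
  have hB : ((1-κ)/(τ^2*κ)) ^ (-a-1) = (1-κ) ^ (-a-1) * (τ^2*κ) ^ (a+1) := by
    rw [Real.div_rpow h1κ.le (by positivity), div_eq_mul_inv,
      ← Real.rpow_neg (by positivity : (0:ℝ) ≤ τ^2*κ)]
    ring_nf
  have hC : (τ^2*κ) ^ (a+1) = τ ^ (2*(a+1)) * κ ^ (a+1) := by
    rw [Real.mul_rpow hT.le hκ.le, ← Real.rpow_natCast τ 2, ← Real.rpow_mul hτ.le]
    norm_num
  have hE : (τ^2*κ^2 : ℝ)⁻¹ = τ ^ (-2:ℝ) * κ ^ (-2:ℝ) := by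
    rw [mul_inv, ← Real.rpow_natCast τ 2, ← Real.rpow_natCast κ 2,
      ← Real.rpow_neg hτ.le, ← Real.rpow_neg hκ.le]
    norm_num
  rw [hA, hB, hC, hE]
  have mτ : τ ^ (-2:ℝ) * τ ^ (2*(a+1)) = τ ^ (2*a) := by
    rw [← Real.rpow_add hτ]; ring_nf
  have mκ : κ ^ (-2:ℝ) * (κ ^ (a+1) * κ ^ ((1/2):ℝ)) = κ ^ (a-1/2) := by
    rw [← Real.rpow_add hκ, ← Real.rpow_add hκ]; ring_nf
  calc τ ^ (-2:ℝ) * κ ^ (-2:ℝ) * ((1-κ) ^ (-a-1) * (τ ^ (2*(a+1)) * κ ^ (a+1)) * κ ^ ((1/2):ℝ))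
      = (τ ^ (-2:ℝ) * τ ^ (2*(a+1))) * (κ ^ (-2:ℝ) * (κ ^ (a+1) * κ ^ ((1/2):ℝ)))
        * (1-κ) ^ (-a-1) := by ring
    _ = τ ^ (2*a) * (κ ^ (a-1/2) * (1-κ) ^ (-a-1)) := by rw [mτ, mκ]; ring

lemma subst_core (a : ℝ) (L : ℝ → ℝ) (τ : ℝ) (hτ : 0 < τ) :
    (∀ κ ∈ Ioo (0:ℝ) 1, HasDerivWithinAt (fun κ : ℝ => (1/τ^2) * (1/κ - 1))
        ((1/τ^2) * (-(κ^2)⁻¹)) (Ioo (0:ℝ) 1) κ) ∧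
    InjOn (fun κ : ℝ => (1/τ^2) * (1/κ - 1)) (Ioo (0:ℝ) 1) ∧
    (fun κ : ℝ => (1/τ^2) * (1/κ - 1)) '' (Ioo (0:ℝ) 1) = Ioi (0:ℝ) ∧
    (∀ κ ∈ Ioo (0:ℝ) 1,
      |(1/τ^2) * (-(κ^2)⁻¹)| *
        (((1/τ^2) * (1/κ - 1)) ^ (-a-1) * L ((1/τ^2) * (1/κ - 1)) *
          (1 + τ^2 * ((1/τ^2) * (1/κ - 1))) ^ (-(1/2):ℝ))
        = τ ^ (2*a) * (κ ^ (a - 1/2) * (1-κ) ^ (-a-1) * L ((1/τ^2) * (1/κ - 1)))) := by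
  have hT : (0:ℝ) < τ^2 := by positivity
  refine ⟨?_, ?_, ?_, ?_⟩
  · intro κ hκ
    have hκ0 : (0:ℝ) < κ := hκ.1
    have h := (((hasDerivAt_inv hκ0.ne').sub_const 1).const_mul (1/τ^2)).hasDerivWithinAt
      (s := Ioo (0:ℝ) 1)
    simpa [one_div] using h
  · apply StrictAntiOn.injOn
    intro x hx y hy hxy
    have h1 : (1:ℝ)/y < 1/x := one_div_lt_one_div_of_lt hx.1 hxy
    have h2 : (0:ℝ) < 1/τ^2 := by positivity
    simp only
    nlinarith
  · ext u
    simp only [mem_image, mem_Ioi, mem_Ioo]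
    constructor
    · rintro ⟨κ, hκ, rfl⟩
      have h1 : (1:ℝ) < 1/κ := by rw [lt_div_iff₀ hκ.1]; linarith [hκ.2]
      have h2 : (0:ℝ) < 1/τ^2 := by positivity
      nlinarith
    · intro hu
      refine ⟨(1 + τ^2*u)⁻¹, ⟨by positivity, ?_⟩, ?_⟩
      · exact inv_lt_one_of_one_lt₀ (by nlinarith)
      · have h1 : (1:ℝ) + τ^2*u ≠ 0 := by nlinarith
        field_simp
        ring
  · intro κ hκ
    have hκ0 : (0:ℝ) < κ := hκ.1
    have hκ1 : κ < 1 := hκ.2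
    have h1κ : (0:ℝ) < 1 - κ := by linarith
    have hfval : (1/τ^2) * (1/κ - 1) = (1-κ)/(τ^2*κ) := by field_simp
    have habs : |(1/τ^2) * (-(κ^2)⁻¹)| = (τ^2*κ^2)⁻¹ := by
      rw [abs_mul, abs_neg, abs_of_pos (by positivity : (0:ℝ) < 1/τ^2),
        abs_of_pos (by positivity : (0:ℝ) < (κ^2)⁻¹)]
      field_simp
    have h1p : 1 + τ^2 * ((1/τ^2) * (1/κ - 1)) = κ⁻¹ := by
      field_simp [hκ0.ne']
      ring
    rw [habs, h1p, hfval]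
    have := coeff_eq a τ κ hτ hκ0 hκ1
    calc (τ^2*κ^2)⁻¹ * (((1-κ)/(τ^2*κ)) ^ (-a-1) * L ((1-κ)/(τ^2*κ)) * (κ⁻¹) ^ (-(1/2):ℝ))
        = ((τ^2*κ^2)⁻¹ * (((1-κ)/(τ^2*κ)) ^ (-a-1) * (κ⁻¹) ^ (-(1/2):ℝ))) *
            L ((1-κ)/(τ^2*κ)) := by ring
      _ = τ ^ (2*a) * (κ ^ (a - 1/2) * (1-κ) ^ (-a-1) * L ((1-κ)/(τ^2*κ))) := by
          rw [this]; ring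


/-- The unnormalized posterior density of the shrinkage coefficient `κ ∈ (0,1)`
given observation `x` and global parameter `τ`. -/
noncomputable def postDens (a : ℝ) (L : ℝ → ℝ) (τ x κ : ℝ) : ℝ :=
  κ ^ (a - 1/2) * (1 - κ) ^ (-a - 1) * L ((1 / τ ^ 2) * (1 / κ - 1)) *
    Real.exp (-(κ * x ^ 2) / 2)

/-- Corollary 4.1: if `L ≤ M` on `(0,∞)`, then for any fixed `ε ∈ (0,1)` and `τ > 0`,
`P(κ < ε | x, τ) ≤ (KM/a) ε^a (1-ε)^{-a} e^{x²/2} τ^{2a} (1 + o(1))`,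
the `o(1)` term being uniform in `x` and vanishing as `τ → 0⁺`. -/
theorem concentration_ineq_one_bounded (a K M : ℝ) (ha : 0 < a) (hK : 0 < K)
    (hM : 0 < M) (L : ℝ → ℝ)
    (hLmeas : Measurable L)
    (hLpos : ∀ t > 0, 0 < L t)
    (hLbdd : ∀ t > 0, L t ≤ M)
    (hnorm : K * ∫ t in Ioi (0:ℝ), t ^ (-a - 1) * L t = 1) :
    ∃ g : ℝ → ℝ, Tendsto g (𝓝[>] 0) (𝓝 0) ∧
      ∀ τ > 0, ∀ x : ℝ, ∀ ε ∈ Ioo (0:ℝ) 1,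
        (∫ κ in Ioo (0:ℝ) ε, postDens a L τ x κ) /
            (∫ κ in Ioo (0:ℝ) 1, postDens a L τ x κ) ≤
          (K * M / a) * ε ^ a * (1 - ε) ^ (-a) * Real.exp (x ^ 2 / 2) *
            τ ^ (2 * a) * (1 + g τ) := by
  set φ : ℝ → ℝ := fun u => u ^ (-a-1) * L u with hφdef
  have hφmeas : AEStronglyMeasurable φ (volume.restrict (Ioi 0)) := by
    apply AEStronglyMeasurable.mul
    · exact (ContinuousOn.rpow_const continuousOn_id
        (fun u hu => Or.inl (ne_of_gt hu))).aestronglyMeasurable measurableSet_Ioi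
    · exact hLmeas.aestronglyMeasurable
  have hφint : IntegrableOn φ (Ioi 0) := by
    by_contra h
    rw [integral_undef h, mul_zero] at hnorm
    exact zero_ne_one hnorm
  have hφval : ∫ u in Ioi (0:ℝ), φ u = 1/K := by
    rw [eq_div_iff hK.ne']
    linear_combination hnorm
  set Ψ : ℝ → ℝ → ℝ := fun τ u => u ^ (-a-1) * L u * (1 + τ^2*u) ^ (-(1/2):ℝ) with hΨdef
  have hbase : ∀ (τ : ℝ), ∀ u ∈ Ioi (0:ℝ), (1:ℝ) ≤ 1 + τ^2*u := by
    intro τ u hu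
    have : (0:ℝ) < u := hu
    nlinarith [sq_nonneg τ]
  have hΨmeas : ∀ τ : ℝ, AEStronglyMeasurable (Ψ τ) (volume.restrict (Ioi 0)) := by
    intro τ
    apply hφmeas.mul
    apply (ContinuousOn.rpow_const _ _).aestronglyMeasurable measurableSet_Ioi
    · exact (continuous_const.add (continuous_const.mul continuous_id)).continuousOn
    · intro u hu
      exact Or.inl (by linarith [hbase τ u hu])
  have hΨnonneg : ∀ τ : ℝ, ∀ u ∈ Ioi (0:ℝ), 0 ≤ Ψ τ u := by
    intro τ u hu
    have hu0 : (0:ℝ) < u := hu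
    have h1 := hbase τ u hu
    have := (hLpos u hu0).le
    positivity
  have hφnonneg : ∀ u ∈ Ioi (0:ℝ), 0 ≤ φ u := by
    intro u hu
    have hu0 : (0:ℝ) < u := hu
    have := (hLpos u hu0).le
    positivity
  have hΨle : ∀ τ : ℝ, ∀ u ∈ Ioi (0:ℝ), Ψ τ u ≤ φ u := by
    intro τ u hu
    have hu0 : (0:ℝ) < u := hu
    have h1 := hbase τ u hu
    have h2 : (1 + τ^2*u) ^ (-(1/2):ℝ) ≤ 1 :=
      Real.rpow_le_one_of_one_le_of_nonpos h1 (by norm_num)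
    calc Ψ τ u = φ u * (1 + τ^2*u) ^ (-(1/2):ℝ) := rfl
      _ ≤ φ u * 1 := mul_le_mul_of_nonneg_left h2 (hφnonneg u hu)
      _ = φ u := mul_one _
  have hΨbd : ∀ τ : ℝ, ∀ᵐ u ∂(volume.restrict (Ioi (0:ℝ))), ‖Ψ τ u‖ ≤ φ u := by
    intro τ
    rw [ae_restrict_iff' measurableSet_Ioi]
    filter_upwards with u hu
    rw [Real.norm_eq_abs, abs_of_nonneg (hΨnonneg τ u hu)]
    exact hΨle τ u hu
  have hΨint : ∀ τ : ℝ, IntegrableOn (Ψ τ) (Ioi 0) := by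
    intro τ
    apply Integrable.mono hφint (hΨmeas τ)
    filter_upwards [hΨbd τ] with u hu
    calc ‖Ψ τ u‖ ≤ φ u := hu
      _ ≤ ‖φ u‖ := le_abs_self _
  set J : ℝ → ℝ := fun τ => ∫ u in Ioi (0:ℝ), Ψ τ u with hJdef
  have hJpos : ∀ τ : ℝ, 0 < J τ := by
    intro τ
    rw [hJdef]
    rw [setIntegral_pos_iff_support_of_nonneg_ae _ (hΨint τ)]
    · have hsub : Ioi (0:ℝ) ⊆ Function.support (Ψ τ) ∩ Ioi 0 := by
        intro u hu
        refine ⟨?_, hu⟩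
        have hu0 : (0:ℝ) < u := hu
        have h1 := hbase τ u hu
        have h2 := hLpos u hu0
        have : 0 < Ψ τ u := by positivity
        exact this.ne'
      calc (0:ℝ≥0∞) < volume (Ioi (0:ℝ)) := by rw [Real.volume_Ioi]; exact ENNReal.zero_lt_top
        _ ≤ volume (Function.support (Ψ τ) ∩ Ioi 0) := measure_mono hsub
    · filter_upwards [ae_restrict_mem measurableSet_Ioi] with u hu
      exact hΨnonneg τ u hu
  have hJtendsto : Tendsto J (𝓝[>] (0:ℝ)) (𝓝 (1/K)) := by
    rw [← hφval]
    apply tendsto_integral_filter_of_dominated_convergence φ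
      (Eventually.of_forall hΨmeas) (Eventually.of_forall hΨbd) hφint
    rw [ae_restrict_iff' measurableSet_Ioi]
    filter_upwards with u hu
    have hu0 : (0:ℝ) < u := hu
    have hc : ContinuousAt (fun τ : ℝ => (1 + τ^2*u) ^ (-(1/2):ℝ)) 0 := by
      apply ContinuousAt.rpow_const
      · exact ((continuous_const.add ((continuous_pow 2).mul continuous_const))).continuousAt
      · left; norm_num
    have h0 : ((1:ℝ) + 0^2*u) ^ (-(1/2):ℝ) = 1 := by norm_num
    have : Tendsto (fun τ : ℝ => Ψ τ u) (𝓝 0) (𝓝 (φ u)) := by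
      have h2 : Tendsto (fun τ : ℝ => (1 + τ^2*u) ^ (-(1/2):ℝ)) (𝓝 0) (𝓝 1) := by
        have := hc.tendsto
        rwa [h0] at this
      have h3 := h2.const_mul (φ u)
      rw [mul_one] at h3
      exact h3
    exact this.mono_left nhdsWithin_le_nhds
  refine ⟨fun τ => 1/(K * J τ) - 1, ?_, ?_⟩
  · have h1 : Tendsto (fun τ => K * J τ) (𝓝[>] (0:ℝ)) (𝓝 1) := by
      have := hJtendsto.const_mul K
      rwa [mul_one_div, div_self hK.ne'] at this
    have h2 : Tendsto (fun τ => 1/(K * J τ)) (𝓝[>] (0:ℝ)) (𝓝 1) := by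
      simp only [one_div]
      have := h1.inv₀ one_ne_zero
      rwa [inv_one] at this
    have h3 := h2.sub_const 1
    rwa [sub_self] at h3
  · intro τ hτ x ε hε
    obtain ⟨hε0, hε1⟩ := hε
    obtain ⟨hf', hinj, himg, hptw⟩ := subst_core a L τ hτ
    set f : ℝ → ℝ := fun κ => (1/τ^2) * (1/κ - 1) with hfdef
    set Dint : ℝ → ℝ := fun κ => κ ^ (a - 1/2) * (1-κ) ^ (-a-1) * L (f κ) with hDdef
    have hτa : (0:ℝ) < τ ^ (2*a) := Real.rpow_pos_of_pos hτ _
    have hsub : J τ = ∫ κ in Ioo (0:ℝ) 1, |(1/τ^2) * (-(κ^2)⁻¹)| • (Ψ τ) (f κ) := by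
      rw [hJdef]
      simp only
      rw [← himg]
      exact integral_image_eq_integral_abs_deriv_smul measurableSet_Ioo hf' hinj (Ψ τ)
    have heqon : EqOn (fun κ => |(1/τ^2) * (-(κ^2)⁻¹)| • (Ψ τ) (f κ))
        (fun κ => τ ^ (2*a) * Dint κ) (Ioo (0:ℝ) 1) := by
      intro κ hκ
      simpa [smul_eq_mul, hΨdef, hDdef, hfdef, mul_assoc] using hptw κ hκ
    have hJeq : J τ = τ ^ (2*a) * ∫ κ in Ioo (0:ℝ) 1, Dint κ := by
      rw [hsub, setIntegral_congr_fun measurableSet_Ioo heqon, integral_const_mul]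
    have hDint' : IntegrableOn (fun κ => |(1/τ^2) * (-(κ^2)⁻¹)| • (Ψ τ) (f κ))
        (Ioo (0:ℝ) 1) := by
      rw [← integrableOn_image_iff_integrableOn_abs_deriv_smul measurableSet_Ioo hf' hinj
        (Ψ τ)]
      rw [show (fun κ : ℝ => (1/τ^2) * (1/κ - 1)) '' (Ioo (0:ℝ) 1) = Ioi 0 from himg]
      exact hΨint τ
    have hDint : IntegrableOn Dint (Ioo (0:ℝ) 1) := by
      have h1 : IntegrableOn (fun κ => τ ^ (2*a) * Dint κ) (Ioo (0:ℝ) 1) :=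
        hDint'.congr_fun heqon measurableSet_Ioo
      have h2 := h1.const_mul ((τ ^ (2*a))⁻¹)
      exact IntegrableOn.congr_fun h2 (fun κ _ => inv_mul_cancel_left₀ hτa.ne' _) measurableSet_Ioo
    have hDval : ∫ κ in Ioo (0:ℝ) 1, Dint κ = J τ / τ ^ (2*a) := by
      rw [hJeq]; field_simp
    have hDpos : 0 < ∫ κ in Ioo (0:ℝ) 1, Dint κ := by
      rw [hDval]; exact div_pos (hJpos τ) hτa
    have hfκpos : ∀ κ ∈ Ioo (0:ℝ) 1, 0 < f κ := by
      intro κ hκ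
      have : f κ ∈ Ioi (0:ℝ) := himg ▸ mem_image_of_mem f hκ
      exact this
    have hDnonneg : ∀ κ ∈ Ioo (0:ℝ) 1, 0 ≤ Dint κ := by
      intro κ hκ
      have h1 : (0:ℝ) < κ := hκ.1
      have h2 : (0:ℝ) < 1 - κ := by linarith [hκ.2]
      have h3 := (hLpos _ (hfκpos κ hκ)).le
      rw [hDdef]
      positivity
    have hpostDeq : ∀ κ : ℝ, postDens a L τ x κ = Dint κ * Real.exp (-(κ * x^2)/2) := by
      intro κ; rfl
    have hpost_nonneg : ∀ κ ∈ Ioo (0:ℝ) 1, 0 ≤ postDens a L τ x κ := by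
      intro κ hκ
      rw [hpostDeq]
      exact mul_nonneg (hDnonneg κ hκ) (Real.exp_nonneg _)
    have hexp_le : ∀ κ ∈ Ioo (0:ℝ) 1, Real.exp (-(κ * x^2)/2) ≤ 1 := by
      intro κ hκ
      rw [Real.exp_le_one_iff]
      have h1 : (0:ℝ) < κ := hκ.1
      nlinarith [sq_nonneg x]
    have hDmeas : AEStronglyMeasurable Dint (volume.restrict (Ioo (0:ℝ) 1)) := by
      have hfmeas : Measurable f :=
        measurable_const.mul ((measurable_const.div measurable_id).sub measurable_const)
      apply AEStronglyMeasurable.mul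
      · apply ContinuousOn.aestronglyMeasurable _ measurableSet_Ioo
        apply ContinuousOn.mul
        · exact ContinuousOn.rpow_const continuousOn_id (fun κ hκ => Or.inl (ne_of_gt hκ.1))
        · exact ContinuousOn.rpow_const (continuous_const.sub continuous_id).continuousOn
            (fun κ hκ => Or.inl (by intro h; nlinarith [hκ.2, sub_eq_zero.mp h]))
      · exact (hLmeas.comp hfmeas).aestronglyMeasurable
    have hPint : IntegrableOn (fun κ => postDens a L τ x κ) (Ioo (0:ℝ) 1) := by
      apply Integrable.mono hDint
      · apply hDmeas.mul
        exact (Real.continuous_exp.comp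
          ((continuous_id.mul continuous_const).neg.div_const 2)).aestronglyMeasurable
      · rw [ae_restrict_iff' measurableSet_Ioo]
        filter_upwards with κ hκ
        rw [Real.norm_eq_abs, Real.norm_eq_abs, abs_of_nonneg (hpost_nonneg κ hκ),
          abs_of_nonneg (hDnonneg κ hκ), hpostDeq]
        calc Dint κ * Real.exp (-(κ * x^2)/2) ≤ Dint κ * 1 :=
            mul_le_mul_of_nonneg_left (hexp_le κ hκ) (hDnonneg κ hκ)
          _ = Dint κ := mul_one _
    have hden : Real.exp (-(x^2/2)) * ∫ κ in Ioo (0:ℝ) 1, Dint κ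
        ≤ ∫ κ in Ioo (0:ℝ) 1, postDens a L τ x κ := by
      have h1 : ∀ κ ∈ Ioo (0:ℝ) 1,
          Real.exp (-(x^2/2)) * Dint κ ≤ postDens a L τ x κ := by
        intro κ hκ
        have h2 : Real.exp (-(x^2/2)) ≤ Real.exp (-(κ * x^2)/2) := by
          apply Real.exp_le_exp.mpr
          have h3 : (0:ℝ) < κ := hκ.1
          nlinarith [sq_nonneg x, hκ.2]
        calc Real.exp (-(x^2/2)) * Dint κ = Dint κ * Real.exp (-(x^2/2)) := mul_comm _ _
          _ ≤ Dint κ * Real.exp (-(κ * x^2)/2) :=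
              mul_le_mul_of_nonneg_left h2 (hDnonneg κ hκ)
          _ = postDens a L τ x κ := (hpostDeq κ).symm
      calc Real.exp (-(x^2/2)) * ∫ κ in Ioo (0:ℝ) 1, Dint κ
          = ∫ κ in Ioo (0:ℝ) 1, Real.exp (-(x^2/2)) * Dint κ := (integral_const_mul _ _).symm
        _ ≤ ∫ κ in Ioo (0:ℝ) 1, postDens a L τ x κ :=
            setIntegral_mono_on (hDint.const_mul _) hPint measurableSet_Ioo h1
    have hlow : 0 < Real.exp (-(x^2/2)) * ∫ κ in Ioo (0:ℝ) 1, Dint κ :=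
      mul_pos (Real.exp_pos _) hDpos
    have hnum_nonneg : 0 ≤ ∫ κ in Ioo (0:ℝ) ε, postDens a L τ x κ := by
      apply setIntegral_nonneg measurableSet_Ioo
      intro κ hκ
      exact hpost_nonneg κ ⟨hκ.1, lt_trans hκ.2 hε1⟩
    have hnum : ∫ κ in Ioo (0:ℝ) ε, postDens a L τ x κ
        ≤ M * (ε ^ a * (1-ε) ^ (-a) / a) := by
      have hPintε : IntegrableOn (fun κ => postDens a L τ x κ) (Ioo (0:ℝ) ε) :=
        hPint.mono_set (Ioo_subset_Ioo_right hε1.le)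
      have hmaj : IntegrableOn (fun κ => M * (κ ^ (a-1) * (1-κ) ^ (-a-1))) (Ioo (0:ℝ) ε) :=
        (betaIntegrable a ε ha hε0 hε1).const_mul M
      have hptw2 : ∀ κ ∈ Ioo (0:ℝ) ε, postDens a L τ x κ
          ≤ M * (κ ^ (a-1) * (1-κ) ^ (-a-1)) := by
        intro κ hκ
        have hκ01 : κ ∈ Ioo (0:ℝ) 1 := ⟨hκ.1, lt_trans hκ.2 hε1⟩
        have h1 : (0:ℝ) < κ := hκ.1
        have h2 : (0:ℝ) < 1 - κ := by linarith [hκ01.2]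
        have e1 : κ ^ (a - 1/2) ≤ κ ^ (a-1) :=
          Real.rpow_le_rpow_of_exponent_ge h1 (by linarith [hκ01.2]) (by linarith)
        have e2 : (0:ℝ) < (1-κ) ^ (-a-1) := Real.rpow_pos_of_pos h2 _
        have e3 := hLpos _ (hfκpos κ hκ01)
        have e4 := hLbdd _ (hfκpos κ hκ01)
        have e5 := hexp_le κ hκ01
        rw [hpostDeq]
        calc Dint κ * Real.exp (-(κ * x^2)/2) ≤ Dint κ * 1 :=
            mul_le_mul_of_nonneg_left e5 (hDnonneg κ hκ01)
          _ = κ ^ (a - 1/2) * (1-κ) ^ (-a-1) * L (f κ) := mul_one _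
          _ ≤ κ ^ (a-1) * (1-κ) ^ (-a-1) * M := by
              apply mul_le_mul _ e4 e3.le _
              · exact mul_le_mul_of_nonneg_right e1 e2.le
              · positivity
          _ = M * (κ ^ (a-1) * (1-κ) ^ (-a-1)) := by ring
      calc ∫ κ in Ioo (0:ℝ) ε, postDens a L τ x κ
          ≤ ∫ κ in Ioo (0:ℝ) ε, M * (κ ^ (a-1) * (1-κ) ^ (-a-1)) :=
            setIntegral_mono_on hPintε hmaj measurableSet_Ioo hptw2
        _ = M * ∫ κ in Ioo (0:ℝ) ε, κ ^ (a-1) * (1-κ) ^ (-a-1) := integral_const_mul _ _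
        _ = M * (ε ^ a * (1-ε) ^ (-a) / a) := by rw [betaIntegral a ε ha hε0 hε1]
    have hstep : (∫ κ in Ioo (0:ℝ) ε, postDens a L τ x κ) /
        (∫ κ in Ioo (0:ℝ) 1, postDens a L τ x κ)
        ≤ (M * (ε ^ a * (1-ε) ^ (-a) / a)) /
          (Real.exp (-(x^2/2)) * ∫ κ in Ioo (0:ℝ) 1, Dint κ) := by
      have hBnn : (0:ℝ) ≤ M * (ε ^ a * (1-ε) ^ (-a) / a) :=
        mul_nonneg hM.le (div_nonneg (mul_nonneg (Real.rpow_nonneg hε0.le _)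
          (Real.rpow_nonneg (by linarith) _)) ha.le)
      apply div_le_div₀ hBnn hnum hlow hden
    apply le_trans hstep
    apply le_of_eq
    rw [hDval, Real.exp_neg]
    have hb : (1:ℝ) + (1/(K * J τ) - 1) = 1/(K * J τ) := by ring
    rw [hb]
    field_simp [ha.ne', hK.ne', (hJpos τ).ne', hτa.ne']
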